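/- Let C be a locally noetherian Grothendieck category and S a simple object such that the full subcategory Sum(S) of direct sums of copies of S is closed under products (equivalently, the inclusion Sum(S) → C has a left adjoint). Then S is tiny: for every noetherian object M, Hom(M,S) is finitely generated over End(S). -/

import Mathlib

open CategoryTheory CategoryTheory.Limits

universe v u

namespace NCSpaces

variable {C : Type u} [Category.{v} C] [Preadditive C]

/-- The hom-group `M ⟶ S` is a left module over the endomorphism ring `End S`,
with `φ • f = f ≫ φ`. -/
instance homSMul (M S : C) : SMul (End S) (M ⟶ S) := ⟨fun φ f => f ≫ φ⟩

@[simp] lemma homSMul_def (M S : C) (φ : End S) (f : M ⟶ S) : φ • f = f ≫ φ := rfl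

instance homModule (M S : C) : Module (End S) (M ⟶ S) where
  one_smul f := by simp [End.one_def]
  mul_smul φ ψ f := by simp [End.mul_def]
  smul_zero φ := by simp
  smul_add φ f g := by simp
  add_smul φ ψ f := by exact Preadditive.comp_add _ _ _ f φ ψ
  zero_smul f := by simp

/-- A simple object `S` is *tiny* if `Hom(M, S)` is a finitely generated module over the
division ring `End S` for every noetherian object `M`. -/
def IsTiny (S : C) : Prop :=
  ∀ M : C, IsNoetherianObject M → Module.Finite (End S) (M ⟶ S)

open CategoryTheory.Limits.CoproductsFromFiniteFiltered

section ConstColim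

variable {A : Type u} [Category.{v} A] {J : Type v} [SmallCategory J]

/-- The constant cocone on `X` with identity legs. -/
@[simps]
def constCocone (X : A) : Cocone ((Functor.const J).obj X) where
  pt := X
  ι := { app := fun _ => 𝟙 X, naturality := fun _ _ _ => by simp }

/-- Over a filtered category, the constant cocone is a colimit. -/
noncomputable def isColimitConstCocone [IsFiltered J] (X : A) :
    IsColimit (constCocone (J := J) X) := by
  have hconn : ∀ (s : Cocone ((Functor.const J).obj X)) (j k : J), s.ι.app j = s.ι.app k := by
    intro s j k
    have h1 := s.ι.naturality (IsFiltered.leftToMax j k)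
    have h2 := s.ι.naturality (IsFiltered.rightToMax j k)
    simp only [Functor.const_obj_obj, Functor.const_obj_map, Category.id_comp,
      Category.comp_id] at h1 h2
    rw [← h1, ← h2]
  exact
  { desc := fun s => s.ι.app (IsFiltered.nonempty.some)
    fac := fun s j => by
      exact (Category.id_comp _).trans (hconn s IsFiltered.nonempty.some j)
    uniq := fun s m h => by
      exact (Category.id_comp _).symm.trans (h IsFiltered.nonempty.some) }

end ConstColim

section Core

variable {A : Type u} [Category.{v} A] [Abelian A] [HasColimits A] [HasFilteredColimits A] [AB5 A]

/-- Key compactness lemma: a map from a noetherian object to a filtered colimit whose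
cocone legs are monomorphisms factors through one of the legs. -/
lemma exists_factor_of_noetherianObject {J : Type v} [SmallCategory J] [IsFiltered J]
    (G : J ⥤ A) (c : Cocone G) (hc : IsColimit c) (hmono : ∀ j, Mono (c.ι.app j))
    (M : A) [IsNoetherianObject M] (f : M ⟶ c.pt) :
    ∃ (j : J) (g : M ⟶ G.obj j), g ≫ c.ι.app j = f := by
  classical
  -- the pullback functor
  let PB : J ⥤ A :=
    { obj := fun j => pullback f (c.ι.app j)
      map := fun {j k} u => pullback.lift (pullback.fst _ _) (pullback.snd _ _ ≫ G.map u)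
        (by rw [Category.assoc, c.w u, pullback.condition])
      map_id := fun j => by apply pullback.hom_ext <;> simp
      map_comp := fun u v => by apply pullback.hom_ext <;> simp <;> simp only [pullback.lift_fst, pullback.lift_snd, pullback.lift_snd_assoc, Category.assoc] }
  let Fst : PB ⟶ (Functor.const J).obj M :=
    { app := fun j => pullback.fst f (c.ι.app j)
      naturality := fun j k u => by simp [PB]; rw [pullback.lift_fst] }
  let Snd : PB ⟶ G :=
    { app := fun j => pullback.snd f (c.ι.app j)
      naturality := fun j k u => by simp [PB]; erw [pullback.lift_snd] }
  have wcomm : Fst ≫ (Functor.const J).map f = Snd ≫ c.ι := by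
    ext j
    exact pullback.condition
  -- the square is a pullback in the functor category
  have hsq : IsLimit (PullbackCone.mk Fst Snd wcomm) := by
    apply evaluationJointlyReflectsLimits
    intro j
    exact (isLimitMapConePullbackConeEquiv ((evaluation J A).obj j) wcomm).symm
      (pullbackIsPullback f (c.ι.app j))
  -- colim preserves it
  have hcolimsq := isLimitPullbackConeMapOfIsLimit (colim (J := J) (C := A)) wcomm hsq
  -- the canonical isos for constant colimits
  let ψM : colimit ((Functor.const J).obj M) ≅ M :=
    colimit.isoColimitCocone ⟨constCocone M, isColimitConstCocone M⟩
  let ψX : colimit ((Functor.const J).obj c.pt) ≅ c.pt :=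
    colimit.isoColimitCocone ⟨constCocone c.pt, isColimitConstCocone c.pt⟩
  -- `colim.map c.ι` is an isomorphism
  have hι : colim.map c.ι ≫ ψX.hom = (colimit.isoColimitCocone ⟨c, hc⟩).hom := by
    apply colimit.hom_ext
    intro j
    simp [ψX, colimit.isoColimitCocone]
    erw [colimit.comp_coconePointUniqueUpToIso_hom]; exact Category.comp_id _
  have hιiso : IsIso (colim.map c.ι) := by
    have : colim.map c.ι = (colimit.isoColimitCocone ⟨c, hc⟩).hom ≫ ψX.inv := by
      rw [← hι]; simp
    rw [this]; infer_instance
  -- hence `colim.map Fst` is an epimorphism (pullback of an epi in an abelian category)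
  have hepi1 : Epi (colim.map Fst) := by
    haveI := hιiso
    let i := IsLimit.conePointUniqueUpToIso hcolimsq
      (pullbackIsPullback (colim.map ((Functor.const J).map f)) (colim.map c.ι))
    have hfst : colim.map Fst = i.hom ≫ pullback.fst _ _ := by
      have h := IsLimit.conePointUniqueUpToIso_hom_comp hcolimsq
        (pullbackIsPullback (colim.map ((Functor.const J).map f)) (colim.map c.ι))
        WalkingCospan.left
      have h' := h.symm
      simp at h'
      exact h'
    rw [hfst]
    exact @epi_comp _ _ _ _ _ i.hom (@IsIso.epi_of_iso _ _ _ _ i.hom ⟨⟨i.inv, i.hom_inv_id, i.inv_hom_id⟩⟩) _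
      (by haveI : Epi (colim.map c.ι) := IsIso.epi_of_iso _; exact Abelian.epi_pullback_of_epi_g _ _)
  -- joint epi-ness of the `pullback.fst`'s
  have joint : ∀ {T : A} (u v : M ⟶ T),
      (∀ j, pullback.fst f (c.ι.app j) ≫ u = pullback.fst f (c.ι.app j) ≫ v) → u = v := by
    intro T u v h
    have heq2 : (colim.map Fst ≫ ψM.hom) ≫ u = (colim.map Fst ≫ ψM.hom) ≫ v := by
      apply colimit.hom_ext
      intro j
      have hj : colimit.ι PB j ≫ colim.map Fst ≫ ψM.hom = pullback.fst f (c.ι.app j) := by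
        simp [ψM, colimit.isoColimitCocone, Fst]
        erw [colimit.comp_coconePointUniqueUpToIso_hom]; exact Category.comp_id _
      calc colimit.ι PB j ≫ (colim.map Fst ≫ ψM.hom) ≫ u
          = (colimit.ι PB j ≫ colim.map Fst ≫ ψM.hom) ≫ u := by simp only [Category.assoc]
        _ = pullback.fst f (c.ι.app j) ≫ u := by rw [hj]
        _ = pullback.fst f (c.ι.app j) ≫ v := h j
        _ = (colimit.ι PB j ≫ colim.map Fst ≫ ψM.hom) ≫ v := by rw [hj]
        _ = colimit.ι PB j ≫ (colim.map Fst ≫ ψM.hom) ≫ v := by simp only [Category.assoc]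
    haveI := hepi1
    haveI : Epi (colim.map Fst ≫ ψM.hom) := epi_comp _ _
    exact (cancel_epi (colim.map Fst ≫ ψM.hom)).mp heq2
  -- the image subobjects
  let P : J → Subobject M := fun j => imageSubobject (pullback.fst f (c.ι.app j))
  obtain ⟨p₀, ⟨j₀, rfl⟩, hmax⟩ := (wellFounded_gt (α := Subobject M)).has_min
    (Set.range P) ⟨P IsFiltered.nonempty.some, Set.mem_range_self _⟩
  have hfac : ∀ (j k : J) (u : j ⟶ k),
      pullback.fst f (c.ι.app j) = PB.map u ≫ pullback.fst f (c.ι.app k) := by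
    intro j k u
    simp [PB]
    rw [pullback.lift_fst]
  have hle : ∀ j, P j ≤ P j₀ := by
    intro j
    have hjk : P j ≤ P (IsFiltered.max j j₀) := by
      rw [show P j = imageSubobject (PB.map (IsFiltered.leftToMax j j₀) ≫
        pullback.fst f (c.ι.app (IsFiltered.max j j₀))) from by rw [← hfac]]
      exact imageSubobject_comp_le _ _
    have hj₀k : P j₀ ≤ P (IsFiltered.max j j₀) := by
      rw [show P j₀ = imageSubobject (PB.map (IsFiltered.rightToMax j j₀) ≫
        pullback.fst f (c.ι.app (IsFiltered.max j j₀))) from by rw [← hfac]]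
      exact imageSubobject_comp_le _ _
    have := hmax (P (IsFiltered.max j j₀)) (Set.mem_range_self _)
    have heq : P j₀ = P (IsFiltered.max j j₀) := hj₀k.lt_or_eq.resolve_left this
    rw [heq] at *
    exact hjk
  -- `pullback.fst f (c.ι.app j₀)` is epi
  have hepi0 : Epi (pullback.fst f (c.ι.app j₀)) := by
    constructor
    intro T u v huv
    apply joint
    intro j
    have h1 : (P j₀).arrow ≫ u = (P j₀).arrow ≫ v := by
      rw [← imageSubobject_arrow_comp (pullback.fst f (c.ι.app j₀))] at huv
      simp only [Category.assoc] at huv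
      exact (cancel_epi (factorThruImageSubobject _)).mp huv
    have h2 : pullback.fst f (c.ι.app j) = factorThruImageSubobject _ ≫
        Subobject.ofLE _ _ (hle j) ≫ (P j₀).arrow := by
      rw [Subobject.ofLE_arrow, imageSubobject_arrow_comp]
    rw [h2]
    simp only [Category.assoc]
    rw [h1]
  -- conclude
  haveI := hmono j₀
  haveI := hepi0
  have hz : f ≫ cokernel.π (c.ι.app j₀) = 0 := by
    rw [← cancel_epi (pullback.fst f (c.ι.app j₀)), ← Category.assoc, pullback.condition,
      Category.assoc, cokernel.condition, comp_zero, comp_zero]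
  exact ⟨j₀, Abelian.monoLift (c.ι.app j₀) f hz, Abelian.monoLift_comp _ _ _⟩

end Core

/-- let `S` be a simple object of a locally noetherian Grothendieck category
such that the full subcategory `Sum S` of direct sums of copies of `S` is closed under
products (every product of copies of `S` is a direct sum of copies of `S`).  Then `S` is
tiny: `Hom(M, S)` is finitely generated over `End S` for every noetherian `M`. -/
theorem tiny_of_sum_closed_under_products
    {C : Type u} [Category.{v} C]
    [Abelian C] [HasLimits C] [HasColimits C] [HasFilteredColimits C] [AB5 C]
    (κ : Type v) (Gen : κ → C) (hsep : ObjectProperty.IsSeparating (Set.range Gen))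
    (hnoeth : ∀ i, IsNoetherianObject (Gen i))
    (S : C) [Simple S]
    (hprod : ∀ ι : Type v, ∃ σ : Type v,
      Nonempty ((∏ᶜ (fun _ : ι => S)) ≅ ∐ (fun _ : σ => S))) :
    IsTiny S := by
  intro M hM
  haveI := hM
  classical
  obtain ⟨σ, ⟨e⟩⟩ := hprod (M ⟶ S)
  let F : Discrete σ ⥤ C := Discrete.functor (fun _ : σ => S)
  -- the cocone over finite subcoproducts with vertex the full coproduct
  let c : Cocone (liftToFinsetObj F) :=
    { pt := ∐ (fun _ : σ => S)
      ι :=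
        { app := fun s => Sigma.desc (fun x => colimit.ι F x.val)
          naturality := fun s t h => by
            dsimp only [liftToFinsetObj]
            ext x
            simp } }
  have hcolim : IsColimit c := by exact isColimitFiniteSubproductsCocone (fun _ : σ => S)
  -- the cocone legs are (split) monomorphisms
  have hm : ∀ s : Finset (Discrete σ), Mono (c.ι.app s) := by
    intro s
    haveI : IsSplitMono (c.ι.app s) := IsSplitMono.mk'
      { retraction := Sigma.desc (fun a : σ =>
          if h : Discrete.mk a ∈ s then Sigma.ι (fun x : s => F.obj x) ⟨Discrete.mk a, h⟩
          else 0)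
        id := by
          dsimp only [liftToFinsetObj]
          ext x
          rw [Category.comp_id]
          have hx : Sigma.ι (fun x : s => F.obj x) x ≫ c.ι.app s
              = Sigma.ι (fun _ : σ => S) (x.val).as := by
            simp [c]
            rfl
          rw [← Category.assoc, hx]
          erw [show (Sigma.ι (fun _ : σ => S) (x.val).as) ≫ Sigma.desc (fun a : σ =>
            if h : Discrete.mk a ∈ s then Sigma.ι (fun x : s => F.obj x) ⟨Discrete.mk a, h⟩
            else 0) = _ from Sigma.ι_desc _ _]
          rw [dif_pos x.2] }
    infer_instance
  -- factor the canonical map `M ⟶ ∏ S` (transported to the coproduct)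
  obtain ⟨s, g, hg⟩ := exists_factor_of_noetherianObject (liftToFinsetObj F) c hcolim hm M
    (Pi.lift (fun f : M ⟶ S => f) ≫ e.hom)
  -- projections of the finite subcoproduct
  let pr : ∀ x : s, (∐ fun x : s => F.obj x) ⟶ S := fun x =>
    Sigma.desc (fun y => if y = x then 𝟙 S else 0)
  have htot : (𝟙 (∐ fun x : s => F.obj x)) =
      ∑ x : s, pr x ≫ Sigma.ι (fun x : s => F.obj x) x := by
    apply Sigma.hom_ext
    intro y
    rw [Preadditive.comp_sum]
    rw [Finset.sum_eq_single y]
    · have hy : Sigma.ι (fun x : s => F.obj x) y ≫ pr y = 𝟙 S := by simp [pr]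
      rw [← Category.assoc, hy, Category.comp_id]
      exact (Category.id_comp _).symm
    · intro b _ hb
      have : (Sigma.ι (fun x : s => F.obj x) y ≫ pr b) = 0 := by
        simp [pr, if_neg (Ne.symm hb)]
      rw [← Category.assoc, this, zero_comp]
    · intro h
      exact absurd (Finset.mem_univ y) h
  let m : s → (M ⟶ S) := fun x => g ≫ pr x
  let φ : (M ⟶ S) → ∀ _ : s, End S := fun f x =>
    Sigma.ι (fun x : s => F.obj x) x ≫ c.ι.app s ≫ e.inv ≫ Pi.π (fun _ : M ⟶ S => S) f
  have key : ∀ f : M ⟶ S, f = ∑ x : s, φ f x • m x := by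
    intro f
    have h1 : f = (g ≫ c.ι.app s) ≫ e.inv ≫ Pi.π (fun _ : M ⟶ S => S) f := by
      rw [hg]
      simp
    calc f = (g ≫ c.ι.app s) ≫ e.inv ≫ Pi.π (fun _ : M ⟶ S => S) f := h1
      _ = g ≫ (𝟙 (∐ fun x : s => F.obj x)) ≫ c.ι.app s ≫ e.inv ≫
          Pi.π (fun _ : M ⟶ S => S) f := by simp only [Category.assoc]; erw [Category.id_comp]; rfl
      _ = ∑ x : s, φ f x • m x := by
          erw [htot, Preadditive.sum_comp, Preadditive.comp_sum]
          apply Finset.sum_congr rfl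
          intro x _
          simp only [homSMul_def, m, φ, pr]
          exact (congrArg (g ≫ ·) (Category.assoc _ _ _)).trans (Category.assoc _ _ _).symm
  refine ⟨Finset.univ.image m, ?_⟩
  rw [eq_top_iff]
  rintro f -
  rw [key f]
  refine Submodule.sum_mem _ (fun x _ => Submodule.smul_mem _ _ (Submodule.subset_span ?_))
  simp only [Finset.coe_image, Finset.coe_univ, Set.image_univ]
  exact Set.mem_range_self x


end NCSpaces
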